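/- Let F : [0,1]² → ℝ be continuous and let w solve the Dirichlet problem (5). Then for every (x,y) ∈ [0,1]², ‖F‖_{L∞([0,1]²)} − π² w(x,y) ≥ ‖F‖_{L∞([0,1]²)} · cosh(π(x − 1/2)) / cosh(π/2). -/

import Mathlib

open Real Set

noncomputable section

/-- The closed unit square `[0,1]²`. -/
def unitSq : Set (ℝ × ℝ) := Icc 0 1 ×ˢ Icc 0 1

/-- The open unit square `(0,1)²`. -/
def unitOSq : Set (ℝ × ℝ) := Ioo 0 1 ×ˢ Ioo 0 1

/-- The `L∞([0,1]²)` norm of `F`. -/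
def supNorm (F : ℝ × ℝ → ℝ) : ℝ := sSup ((fun p => |F p|) '' unitSq)

/-- Pure second partial derivative `∂_x² w` at `p`. -/
def pdx2 (w : ℝ × ℝ → ℝ) (p : ℝ × ℝ) : ℝ := deriv (deriv (fun x => w (x, p.2))) p.1

/-- Pure second partial derivative `∂_y² w` at `p`. -/
def pdy2 (w : ℝ × ℝ → ℝ) (p : ℝ × ℝ) : ℝ := deriv (deriv (fun y => w (p.1, y))) p.2

/-- `p` lies on the boundary of the unit square. -/
def OnBdry (p : ℝ × ℝ) : Prop := p.1 = 0 ∨ p.1 = 1 ∨ p.2 = 0 ∨ p.2 = 1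

/-- `w` solves the Dirichlet problem (5): `-Δw + π² w = F` in `(0,1)²`, `w = 0` on the
boundary, with `w` continuous on `[0,1]²` and twice continuously differentiable inside. -/
def SolvesP5 (F w : ℝ × ℝ → ℝ) : Prop :=
  ContinuousOn w unitSq ∧ ContDiffOn ℝ 2 w unitOSq ∧
    (∀ p ∈ unitOSq, -(pdx2 w p + pdy2 w p) + π ^ 2 * w p = F p) ∧
    (∀ p ∈ unitSq, OnBdry p → w p = 0)

/-- The weights `γ_{ij}`: `2/3` if `i = j = N/2`, and `1` otherwise. -/
def gam (N i j : ℕ) : ℝ := if i = N / 2 ∧ j = N / 2 then 2 / 3 else 1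

/-- Second difference in `x` on the grid of step `h = 1/N`. -/
def dx2 (N : ℕ) (V : ℕ → ℕ → ℝ) (i j : ℕ) : ℝ :=
  (V (i + 1) j - 2 * V i j + V (i - 1) j) / ((N : ℝ)⁻¹ ^ 2)

/-- Second difference in `y` on the grid of step `h = 1/N`. -/
def dy2 (N : ℕ) (V : ℕ → ℕ → ℝ) (i j : ℕ) : ℝ :=
  (V i (j + 1) - 2 * V i j + V i (j - 1)) / ((N : ℝ)⁻¹ ^ 2)

/-- `W` solves the two-dimensional scheme (7). -/
def Scheme2d (N : ℕ) (F : ℝ × ℝ → ℝ) (W : ℕ → ℕ → ℝ) : Prop :=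
  (∀ i j, 0 < i → i < N → 0 < j → j < N →
    -(dx2 N W i j + dy2 N W i j) + gam N i j * π ^ 2 * W i j
      = gam N i j * F ((i : ℝ) / N, (j : ℝ) / N)) ∧
  (∀ i j, i ≤ N → j ≤ N → (i = 0 ∨ i = N ∨ j = 0 ∨ j = N) → W i j = 0)

/-- Regularity: third-order smoothness up to the boundary of the square and pure
fourth-order partial derivatives in `x` and `y` existing inside, with
`|∂_x⁴ w| + |∂_y⁴ w| ≤ M` there. -/
def Reg4 (w : ℝ × ℝ → ℝ) (M : ℝ) : Prop :=
  ContDiffOn ℝ 3 w unitSq ∧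
    ∀ p ∈ unitOSq,
      (∀ k < 4, DifferentiableAt ℝ (deriv^[k] fun x => w (x, p.2)) p.1) ∧
      (∀ k < 4, DifferentiableAt ℝ (deriv^[k] fun y => w (p.1, y)) p.2) ∧
      |deriv^[4] (fun x => w (x, p.2)) p.1| + |deriv^[4] (fun y => w (p.1, y)) p.2| ≤ M

open Filter Topology

lemma isOpen_unitOSq : IsOpen unitOSq := isOpen_Ioo.prod isOpen_Ioo

lemma slice_x_contDiffOn {u : ℝ × ℝ → ℝ} (h : ContDiffOn ℝ 2 u unitOSq) {c : ℝ}
    (hc : c ∈ Ioo (0:ℝ) 1) : ContDiffOn ℝ 2 (fun x => u (x, c)) (Ioo 0 1) :=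
  h.comp ((contDiff_id.prodMk contDiff_const).contDiffOn) (fun x hx => ⟨hx, hc⟩)

lemma slice_y_contDiffOn {u : ℝ × ℝ → ℝ} (h : ContDiffOn ℝ 2 u unitOSq) {c : ℝ}
    (hc : c ∈ Ioo (0:ℝ) 1) : ContDiffOn ℝ 2 (fun y => u (c, y)) (Ioo 0 1) :=
  h.comp ((contDiff_const.prodMk contDiff_id).contDiffOn) (fun y hy => ⟨hc, hy⟩)

/-- At an interior local minimum of a C² function, the second derivative is nonnegative. -/
lemma second_deriv_nonneg_of_isLocalMin {g : ℝ → ℝ} {s : Set ℝ} (hs : IsOpen s)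
    {x₀ : ℝ} (hx₀ : x₀ ∈ s) (hg : ContDiffOn ℝ 2 g s) (hmin : IsLocalMin g x₀) :
    0 ≤ deriv (deriv g) x₀ := by
  by_contra hcon
  push_neg at hcon
  have hgd : ∀ y ∈ s, DifferentiableAt ℝ g y := fun y hy =>
    (hg.differentiableOn (by norm_num)).differentiableAt (hs.mem_nhds hy)
  have hg' : ContDiffOn ℝ 1 (deriv g) s := hg.deriv_of_isOpen hs (by norm_num)
  have hdd : DifferentiableAt ℝ (deriv g) x₀ :=
    (hg'.differentiableOn one_ne_zero).differentiableAt (hs.mem_nhds hx₀)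
  have hslope : Tendsto (slope (deriv g) x₀) (𝓝[≠] x₀) (𝓝 (deriv (deriv g) x₀)) :=
    hasDerivAt_iff_tendsto_slope.mp hdd.hasDerivAt
  have hev1 : ∀ᶠ x in 𝓝[≠] x₀, slope (deriv g) x₀ x < 0 :=
    hslope.eventually_lt_const hcon
  have hev2 : ∀ᶠ x in 𝓝 x₀, x ∈ s ∧ g x₀ ≤ g x :=
    (hs.eventually_mem hx₀).and hmin
  have hev : ∀ᶠ x in 𝓝[≠] x₀, slope (deriv g) x₀ x < 0 ∧ (x ∈ s ∧ g x₀ ≤ g x) :=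
    hev1.and (eventually_nhdsWithin_of_eventually_nhds hev2)
  rw [eventually_nhdsWithin_iff] at hev
  obtain ⟨ε, hε, hball⟩ := Metric.eventually_nhds_iff.mp hev
  set x := x₀ + ε / 2 with hxdef
  have hxlt : x₀ < x := by simp [hxdef]; linarith
  have hmem : ∀ y ∈ Ioc x₀ x, slope (deriv g) x₀ y < 0 ∧ (y ∈ s ∧ g x₀ ≤ g y) := by
    intro y hy
    have h1 : dist y x₀ < ε := by
      rw [Real.dist_eq, abs_of_pos (by linarith [hy.1])]
      have := hy.2
      simp only [hxdef] at this
      linarith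
    exact hball h1 (ne_of_gt hy.1)
  have hcont : ContinuousOn g (Icc x₀ x) := by
    intro y hy
    have hys : y ∈ s := by
      rcases eq_or_lt_of_le hy.1 with h | h
      · exact h ▸ hx₀
      · exact (hmem y ⟨h, hy.2⟩).2.1
    exact ((hgd y hys).continuousAt).continuousWithinAt
  have hderiv : ∀ y ∈ Ioo x₀ x, HasDerivAt g (deriv g y) y := fun y hy =>
    (hgd y (hmem y ⟨hy.1, le_of_lt hy.2⟩).2.1).hasDerivAt
  obtain ⟨ξ, hξ, hξeq⟩ := exists_hasDerivAt_eq_slope g (deriv g) hxlt hcont hderiv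
  have hgx : g x₀ ≤ g x := (hmem x ⟨hxlt, le_rfl⟩).2.2
  have hge : (0:ℝ) ≤ (g x - g x₀) / (x - x₀) :=
    div_nonneg (by linarith) (by linarith)
  have hslξ : slope (deriv g) x₀ ξ < 0 := (hmem ξ ⟨hξ.1, le_of_lt hξ.2⟩).1
  have h0 : deriv g x₀ = 0 := hmin.deriv_eq_zero
  rw [slope_def_field] at hslξ
  -- slope = (deriv g ξ - deriv g x₀)/(ξ - x₀)
  have hξpos : 0 < ξ - x₀ := by linarith [hξ.1]
  have hneg : deriv g ξ < 0 := by
    have := hslξ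
    rw [div_lt_iff₀ hξpos] at this
    · linarith [this]
  rw [hξeq] at hneg
  linarith

/-- Maximum principle for `-Δ + π²` on the unit square. -/
lemma max_principle {u : ℝ × ℝ → ℝ} (hc : ContinuousOn u unitSq)
    (h2 : ContDiffOn ℝ 2 u unitOSq)
    (hineq : ∀ p ∈ unitOSq, 0 ≤ -(pdx2 u p + pdy2 u p) + π ^ 2 * u p)
    (hbd : ∀ p ∈ unitSq, OnBdry p → 0 ≤ u p) : ∀ p ∈ unitSq, 0 ≤ u p := by
  have hcomp : IsCompact unitSq := isCompact_Icc.prod isCompact_Icc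
  have hne : unitSq.Nonempty := ⟨(0, 0), by
    constructor <;> exact ⟨le_rfl, zero_le_one⟩⟩
  obtain ⟨p₀, hp₀, hmin⟩ := hcomp.exists_isMinOn hne hc
  intro p hp
  have key : 0 ≤ u p₀ := by
    by_contra hneg
    push_neg at hneg
    have hnb : ¬ OnBdry p₀ := fun h => absurd (hbd p₀ hp₀ h) (not_le.mpr hneg)
    simp only [OnBdry, not_or] at hnb
    obtain ⟨h1, h2', h3, h4⟩ := hnb
    have hx1 : p₀.1 ∈ Ioo (0:ℝ) 1 :=
      ⟨lt_of_le_of_ne hp₀.1.1 (Ne.symm h1), lt_of_le_of_ne hp₀.1.2 h2'⟩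
    have hy1 : p₀.2 ∈ Ioo (0:ℝ) 1 :=
      ⟨lt_of_le_of_ne hp₀.2.1 (Ne.symm h3), lt_of_le_of_ne hp₀.2.2 h4⟩
    have hpo : p₀ ∈ unitOSq := ⟨hx1, hy1⟩
    have hloc : IsLocalMin u p₀ := by
      filter_upwards [isOpen_unitOSq.eventually_mem hpo] with q hq
      exact hmin ⟨⟨le_of_lt hq.1.1, le_of_lt hq.1.2⟩, ⟨le_of_lt hq.2.1, le_of_lt hq.2.2⟩⟩
    have htx : Tendsto (fun x : ℝ => (x, p₀.2)) (𝓝 p₀.1) (𝓝 p₀) := by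
      have := (continuous_id.prodMk (continuous_const (y := p₀.2))).tendsto p₀.1
      simpa using this
    have hty : Tendsto (fun y : ℝ => (p₀.1, y)) (𝓝 p₀.2) (𝓝 p₀) := by
      have := ((continuous_const (y := p₀.1)).prodMk continuous_id).tendsto p₀.2
      simpa using this
    have hlocx : IsLocalMin (fun x => u (x, p₀.2)) p₀.1 := by
      have := htx.eventually hloc
      filter_upwards [this] with q hq using hq
    have hlocy : IsLocalMin (fun y => u (p₀.1, y)) p₀.2 := by
      have := hty.eventually hloc
      filter_upwards [this] with q hq using hq
    have hdx : 0 ≤ pdx2 u p₀ :=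
      second_deriv_nonneg_of_isLocalMin isOpen_Ioo hx1 (slice_x_contDiffOn h2 hy1) hlocx
    have hdy : 0 ≤ pdy2 u p₀ :=
      second_deriv_nonneg_of_isLocalMin isOpen_Ioo hy1 (slice_y_contDiffOn h2 hx1) hlocy
    have := hineq p₀ hpo
    have hneg2 : π ^ 2 * u p₀ < 0 :=
      mul_neg_of_pos_of_neg (by positivity) hneg
    linarith
  exact le_trans key (hmin hp)

/-- Second derivative of a difference `A - g` where `A` has explicit global derivatives
and `g` is C² on an open set. -/
lemma deriv2_sub {A A' A'' g : ℝ → ℝ} (hA : ∀ x, HasDerivAt A (A' x) x)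
    (hA' : ∀ x, HasDerivAt A' (A'' x) x) {s : Set ℝ} (hs : IsOpen s)
    (hg : ContDiffOn ℝ 2 g s) {x₀ : ℝ} (hx : x₀ ∈ s) :
    deriv (deriv (fun x => A x - g x)) x₀ = A'' x₀ - deriv (deriv g) x₀ := by
  have hgd : ∀ y ∈ s, DifferentiableAt ℝ g y := fun y hy =>
    (hg.differentiableOn (by norm_num)).differentiableAt (hs.mem_nhds hy)
  have hg' : ContDiffOn ℝ 1 (deriv g) s := hg.deriv_of_isOpen hs (by norm_num)
  have hdd : DifferentiableAt ℝ (deriv g) x₀ :=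
    (hg'.differentiableOn one_ne_zero).differentiableAt (hs.mem_nhds hx)
  have h1 : deriv (fun x => A x - g x) =ᶠ[𝓝 x₀] fun y => A' y - deriv g y := by
    filter_upwards [hs.eventually_mem hx] with y hy
    rw [deriv_fun_sub (hA y).differentiableAt (hgd y hy), (hA y).deriv]
  rw [h1.deriv_eq, deriv_fun_sub (hA' x₀).differentiableAt hdd, (hA' x₀).deriv]

/-- `‖F‖_∞ - π² w(x,y) ≥ ‖F‖_∞ cosh(π(x-1/2)) / cosh(π/2)` on `[0,1]²`. -/
theorem barrier_lower_bound (F w : ℝ × ℝ → ℝ)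
    (hF : ContinuousOn F unitSq) (hw : SolvesP5 F w) :
    ∀ p ∈ unitSq,
      supNorm F * Real.cosh (π * (p.1 - 1 / 2)) / Real.cosh (π / 2) ≤
        supNorm F - π ^ 2 * w p := by
  
  obtain ⟨hwc, hw2, hpde, hwbd⟩ := hw
  set K := supNorm F with hKdef
  have hcomp : IsCompact unitSq := isCompact_Icc.prod isCompact_Icc
  have hbdd : BddAbove ((fun p => |F p|) '' unitSq) :=
    (hcomp.image_of_continuousOn hF.abs).bddAbove
  have hKb : ∀ q ∈ unitSq, |F q| ≤ K := fun q hq =>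
    le_csSup hbdd (mem_image_of_mem _ hq)
  have h00 : ((0:ℝ), (0:ℝ)) ∈ unitSq := ⟨⟨le_rfl, zero_le_one⟩, ⟨le_rfl, zero_le_one⟩⟩
  have hK0 : 0 ≤ K := le_trans (abs_nonneg _) (hKb _ h00)
  have hC : 0 < Real.cosh (π / 2) := Real.cosh_pos _
  have hπ2 : (0:ℝ) < π ^ 2 := by positivity
  -- the barrier-corrected function
  set u : ℝ × ℝ → ℝ := fun q =>
    (K - K * Real.cosh (π * (q.1 - 1 / 2)) / Real.cosh (π / 2)) / π ^ 2 - w q with hudef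
  -- derivatives of the 1-d barrier
  set A : ℝ → ℝ := fun x => (K - K * Real.cosh (π * (x - 1 / 2)) / Real.cosh (π / 2)) / π ^ 2
    with hAdef
  set A' : ℝ → ℝ := fun x => -(K * (Real.sinh (π * (x - 1 / 2)) * π) / Real.cosh (π / 2)) / π ^ 2
    with hA'def
  have hA : ∀ x, HasDerivAt A (A' x) x := by
    intro x
    have hlin : HasDerivAt (fun x : ℝ => π * (x - 1 / 2)) π x := by
      exact (((hasDerivAt_id x).sub_const (1/2)).const_mul π).congr_deriv (mul_one π)
    have h := ((((hlin.cosh).const_mul K).div_const (Real.cosh (π / 2))).const_sub K).div_const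
      (π ^ 2)
    convert h using 1
    all_goals (simp only [hA'def]; ring)
  have hA' : ∀ x, HasDerivAt A' (-K * Real.cosh (π * (x - 1 / 2)) / Real.cosh (π / 2)) x := by
    intro x
    have hlin : HasDerivAt (fun x : ℝ => π * (x - 1 / 2)) π x := by
      exact (((hasDerivAt_id x).sub_const (1/2)).const_mul π).congr_deriv (mul_one π)
    have h := ((((hlin.sinh).mul_const π).const_mul K).div_const (Real.cosh (π / 2))).neg.div_const
      (π ^ 2)
    have hπ : π ≠ 0 := ne_of_gt Real.pi_pos
    convert h using 1
    · rfl
    · rfl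
    · rfl
    · field_simp
  -- cosh bound on [0,1]
  have hcosh_le : ∀ x : ℝ, x ∈ Icc (0:ℝ) 1 →
      Real.cosh (π * (x - 1 / 2)) ≤ Real.cosh (π / 2) := by
    intro x hx
    rw [Real.cosh_le_cosh]
    rw [abs_mul, abs_of_pos Real.pi_pos]
    rw [abs_of_pos (by positivity : (0:ℝ) < π / 2)]
    have : |x - 1 / 2| ≤ 1 / 2 := abs_le.mpr ⟨by linarith [hx.1], by linarith [hx.2]⟩
    calc π * |x - 1 / 2| ≤ π * (1 / 2) := by
          exact mul_le_mul_of_nonneg_left this (le_of_lt Real.pi_pos)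
      _ = π / 2 := by ring
  -- continuity and smoothness of u
  have hAcont : Continuous fun q : ℝ × ℝ => A q.1 := by
    apply Continuous.div_const
    apply Continuous.sub continuous_const
    apply Continuous.div_const
    exact continuous_const.mul (Real.continuous_cosh.comp
      (continuous_const.mul (continuous_fst.sub continuous_const)))
  have hucont : ContinuousOn u unitSq := (hAcont.continuousOn).sub hwc
  have huC2 : ContDiffOn ℝ 2 u unitOSq := by
    apply ContDiffOn.sub _ hw2
    apply ContDiff.contDiffOn
    apply ContDiff.div_const
    apply ContDiff.sub contDiff_const
    apply ContDiff.div_const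
    exact contDiff_const.mul (Real.contDiff_cosh.comp
      (contDiff_const.mul (contDiff_fst.sub contDiff_const)))
  -- boundary nonnegativity
  have hubd : ∀ p ∈ unitSq, OnBdry p → 0 ≤ u p := by
    intro p hp hb
    have hw0 : w p = 0 := hwbd p hp hb
    have hcle : Real.cosh (π * (p.1 - 1 / 2)) ≤ Real.cosh (π / 2) := hcosh_le p.1 hp.1
    have : K * Real.cosh (π * (p.1 - 1 / 2)) / Real.cosh (π / 2) ≤ K := by
      rw [div_le_iff₀ hC]
      nlinarith
    simp only [hudef, hw0, sub_zero]
    apply div_nonneg _ (le_of_lt hπ2)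
    linarith
  -- interior differential inequality
  have huineq : ∀ p ∈ unitOSq, 0 ≤ -(pdx2 u p + pdy2 u p) + π ^ 2 * u p := by
    intro p hp
    have hx1 : p.1 ∈ Ioo (0:ℝ) 1 := hp.1
    have hy1 : p.2 ∈ Ioo (0:ℝ) 1 := hp.2
    have hdx : pdx2 u p = -K * Real.cosh (π * (p.1 - 1 / 2)) / Real.cosh (π / 2) - pdx2 w p := by
      simp only [pdx2, hudef]
      exact deriv2_sub hA hA' isOpen_Ioo (slice_x_contDiffOn hw2 hy1) hx1
    have hdy : pdy2 u p = 0 - pdy2 w p := by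
      simp only [pdy2, hudef]
      exact deriv2_sub (fun y => hasDerivAt_const y (A p.1))
        (fun y => hasDerivAt_const y 0) isOpen_Ioo (slice_y_contDiffOn hw2 hx1) hy1
    have hpF := hpde p hp
    have hpsq : p ∈ unitSq :=
      ⟨⟨le_of_lt hx1.1, le_of_lt hx1.2⟩, ⟨le_of_lt hy1.1, le_of_lt hy1.2⟩⟩
    have hFle : F p ≤ K := le_trans (le_abs_self _) (hKb p hpsq)
    have hcancel : π ^ 2 * ((K - K * Real.cosh (π * (p.1 - 1 / 2)) / Real.cosh (π / 2)) / π ^ 2)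
        = K - K * Real.cosh (π * (p.1 - 1 / 2)) / Real.cosh (π / 2) :=
      mul_div_cancel₀ _ (ne_of_gt hπ2)
    rw [hdx, hdy]
    have hval : u p = (K - K * Real.cosh (π * (p.1 - 1 / 2)) / Real.cosh (π / 2)) / π ^ 2 - w p :=
      rfl
    rw [hval, mul_sub (π ^ 2)
      ((K - K * Real.cosh (π * (p.1 - 1 / 2)) / Real.cosh (π / 2)) / π ^ 2) (w p), hcancel]
    have hring : -(-K * Real.cosh (π * (p.1 - 1 / 2)) / Real.cosh (π / 2) - pdx2 w p
          + (0 - pdy2 w p)) +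
        (K - K * Real.cosh (π * (p.1 - 1 / 2)) / Real.cosh (π / 2) - π ^ 2 * w p)
        = K - (-(pdx2 w p + pdy2 w p) + π ^ 2 * w p) := by ring
    rw [hring, hpF]
    linarith
  have hkey := max_principle hucont huC2 huineq hubd
  intro p hp
  have h := hkey p hp
  have hval : u p = (K - K * Real.cosh (π * (p.1 - 1 / 2)) / Real.cosh (π / 2)) / π ^ 2 - w p :=
    rfl
  rw [hval] at h
  have hcancel : π ^ 2 * ((K - K * Real.cosh (π * (p.1 - 1 / 2)) / Real.cosh (π / 2)) / π ^ 2)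
      = K - K * Real.cosh (π * (p.1 - 1 / 2)) / Real.cosh (π / 2) :=
    mul_div_cancel₀ _ (ne_of_gt hπ2)
  have h2 := mul_le_mul_of_nonneg_left h (le_of_lt hπ2)
  rw [mul_sub (π ^ 2)
    ((K - K * Real.cosh (π * (p.1 - 1 / 2)) / Real.cosh (π / 2)) / π ^ 2) (w p), hcancel] at h2
  linarith
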